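/- Let V be a real vector space of dimension 2n+1, let η be a linear functional on V and ω an alternating bilinear form on V such that η ∧ ωⁿ ≠ 0 (as an alternating (2n+1)-form). Then there exists a unique vector R ∈ V such that ω(R, v) = 0 for all v ∈ V and η(R) = 1. -/

import Mathlib

noncomputable section WedgeMachinery

variable {V : Type*} [AddCommGroup V] [Module ℝ V]

/-- Wedge product of real-valued alternating forms, via `AlternatingMap.domCoprod`
(the shuffle convention, with no factorial factors). -/
def altWedge {a b : ℕ} (α : V [⋀^Fin a]→ₗ[ℝ] ℝ) (β : V [⋀^Fin b]→ₗ[ℝ] ℝ) :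
    V [⋀^Fin (a + b)]→ₗ[ℝ] ℝ :=
  ((LinearMap.mul' ℝ ℝ).compAlternatingMap (α.domCoprod β)).domDomCongr finSumFinEquiv

/-- `n`-th wedge power of an alternating `2`-form. -/
def altPow (ω : V [⋀^Fin 2]→ₗ[ℝ] ℝ) : (n : ℕ) → V [⋀^Fin (2 * n)]→ₗ[ℝ] ℝ
  | 0 => AlternatingMap.constOfIsEmpty ℝ V (Fin 0) 1
  | n + 1 => altWedge (altPow ω n) ω

/-- A linear functional, regarded as an alternating `1`-form. -/
def alt1 (η : V →ₗ[ℝ] ℝ) : V [⋀^Fin 1]→ₗ[ℝ] ℝ :=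
  AlternatingMap.ofSubsingleton ℝ V ℝ 0 η

end WedgeMachinery

noncomputable section ReebAux

variable {V : Type*} [AddCommGroup V] [Module ℝ V]

private lemma vec2_eq_update0 (a y : V) : (![a, y] : Fin 2 → V) = Function.update ![0, y] 0 a := by
  funext j
  fin_cases j <;> simp

private lemma vec2_eq_update1 (a y : V) : (![a, y] : Fin 2 → V) = Function.update ![a, 0] 1 y := by
  funext j
  fin_cases j <;> simp

/-- The bilinear form associated to an alternating 2-form. -/
def omBilin (ω : V [⋀^Fin 2]→ₗ[ℝ] ℝ) : V →ₗ[ℝ] V →ₗ[ℝ] ℝ :=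
  LinearMap.mk₂ ℝ (fun x y => ω ![x, y])
    (fun x x' y => by
      show ω ![x + x', y] = ω ![x, y] + ω ![x', y]
      rw [vec2_eq_update0 (x + x') y, vec2_eq_update0 x y, vec2_eq_update0 x' y,
        AlternatingMap.map_update_add])
    (fun c x y => by
      show ω ![c • x, y] = c • ω ![x, y]
      rw [vec2_eq_update0 (c • x) y, vec2_eq_update0 x y, AlternatingMap.map_update_smul])
    (fun x y y' => by
      show ω ![x, y + y'] = ω ![x, y] + ω ![x, y']
      rw [vec2_eq_update1 x (y + y'), vec2_eq_update1 x y, vec2_eq_update1 x y',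
        AlternatingMap.map_update_add])
    (fun c x y => by
      show ω ![x, c • y] = c • ω ![x, y]
      rw [vec2_eq_update1 x (c • y), vec2_eq_update1 x y, AlternatingMap.map_update_smul])

@[simp] lemma omBilin_apply (ω : V [⋀^Fin 2]→ₗ[ℝ] ℝ) (x y : V) :
    omBilin ω x y = ω ![x, y] := rfl

lemma omega_swap (ω : V [⋀^Fin 2]→ₗ[ℝ] ℝ) (x y : V) : ω ![y, x] = - ω ![x, y] := by
  have h := ω.map_swap (v := ![x, y]) (i := (0 : Fin 2)) (j := 1) (by decide)
  have h2 : (![x, y] : Fin 2 → V) ∘ Equiv.swap (0 : Fin 2) 1 = ![y, x] := by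
    funext j
    fin_cases j <;> simp [Equiv.swap_apply_of_ne_of_ne]
  rwa [h2] at h

/-- `γ` kills `x` : it vanishes whenever one of its arguments is `x`. -/
def Kills (x : V) {k : ℕ} (γ : V [⋀^Fin k]→ₗ[ℝ] ℝ) : Prop :=
  ∀ v : Fin k → V, ∀ i : Fin k, v i = x → γ v = 0

lemma kills_altWedge {x : V} {a b : ℕ} {α : V [⋀^Fin a]→ₗ[ℝ] ℝ} {β : V [⋀^Fin b]→ₗ[ℝ] ℝ}
    (hα : Kills x α) (hβ : Kills x β) : Kills x (altWedge α β) := by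
  intro v i hv
  show ((LinearMap.mul' ℝ ℝ).compAlternatingMap (α.domCoprod β)).domDomCongr finSumFinEquiv v = 0
  rw [AlternatingMap.domDomCongr_apply, LinearMap.compAlternatingMap_apply]
  set w : Fin a ⊕ Fin b → V := v ∘ finSumFinEquiv with hw_def
  have hw : w (finSumFinEquiv.symm i) = x := by
    simp [hw_def, hv]
  rw [AlternatingMap.domCoprod_apply, MultilinearMap.sum_apply, map_sum]
  refine Finset.sum_eq_zero fun σ _ => ?_
  induction σ using Quotient.inductionOn' with
  | h σ =>
    rw [AlternatingMap.domCoprod.summand_mk'']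
    rw [MultilinearMap.smul_apply, MultilinearMap.domDomCongr_apply,
      MultilinearMap.domCoprod_apply]
    rcases hk : σ⁻¹ (finSumFinEquiv.symm i) with k | k
    · have hx' : w (σ (Sum.inl k)) = x := by rw [← hk, ← Equiv.Perm.mul_apply, mul_inv_cancel, Equiv.Perm.one_apply]; exact hw
      have : α (fun i₁ => w (σ (Sum.inl i₁))) = 0 := hα _ k hx'
      simp only [AlternatingMap.coe_multilinearMap, this, TensorProduct.zero_tmul, smul_zero,
        map_zero]
    · have hx' : w (σ (Sum.inr k)) = x := by rw [← hk, ← Equiv.Perm.mul_apply, mul_inv_cancel, Equiv.Perm.one_apply]; exact hw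
      have : β (fun i₂ => w (σ (Sum.inr i₂))) = 0 := hβ _ k hx'
      simp only [AlternatingMap.coe_multilinearMap, this, TensorProduct.tmul_zero, smul_zero,
        map_zero]

lemma kills_alt1 {η : V →ₗ[ℝ] ℝ} {x : V} (hx : η x = 0) : Kills x (alt1 η) := by
  intro v i hv
  have hi : i = 0 := Subsingleton.elim _ _
  subst hi
  show η (v 0) = 0
  rw [hv, hx]

lemma kills_omega {ω : V [⋀^Fin 2]→ₗ[ℝ] ℝ} {x : V} (hx : ∀ y, ω ![x, y] = 0) : Kills x ω := by
  intro v i hv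
  have hv2 : v = ![v 0, v 1] := by
    funext j; fin_cases j <;> rfl
  fin_cases i <;> simp only [Fin.zero_eta, Fin.mk_one] at hv
  · rw [hv2, hv]
    exact hx _
  · rw [hv2, hv, omega_swap, hx, neg_zero]

lemma kills_altPow {ω : V [⋀^Fin 2]→ₗ[ℝ] ℝ} {x : V} (hx : ∀ y, ω ![x, y] = 0) (n : ℕ) :
    Kills x (altPow ω n) := by
  induction n with
  | zero => intro v i hv; exact i.elim0
  | succ m ih => exact kills_altWedge ih (kills_omega hx)

lemma kills_eq_zero [FiniteDimensional ℝ V] {m : ℕ} (hm : Module.finrank ℝ V = m)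
    {x : V} (hx : x ≠ 0) {γ : V [⋀^Fin m]→ₗ[ℝ] ℝ} (hk : Kills x γ) : γ = 0 := by
  have hli := LinearIndepOn.singleton (R := ℝ) (v := (id : V → V)) (i := x) hx
  let b := Module.Basis.extend hli
  haveI : Fintype ↥(hli.extend (Set.subset_univ ({x} : Set V))) :=
    FiniteDimensional.fintypeBasisIndex b
  have hcard : Fintype.card ↥(hli.extend (Set.subset_univ ({x} : Set V))) = m := by
    rw [← Module.finrank_eq_card_basis b, hm]
  let e := Fintype.equivFinOfCardEq hcard
  let b' := b.reindex e
  have hmem : x ∈ hli.extend (Set.subset_univ ({x} : Set V)) :=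
    hli.subset_extend _ (Set.mem_singleton x)
  have hx' : b' (e ⟨x, hmem⟩) = x := by
    simp only [b', Module.Basis.reindex_apply, Equiv.symm_apply_apply]
    exact Module.Basis.extend_apply_self hli ⟨x, hmem⟩
  have h0 : γ ⇑b' = 0 := hk _ _ hx'
  exact (AlternatingMap.map_basis_eq_zero_iff b' γ).mp h0

end ReebAux

/-- Let `V` be a real vector space of dimension `2n+1`, `η` a linear
functional and `ω` an alternating bilinear form on `V` with `η ∧ ωⁿ ≠ 0`.  Then there is a
unique vector `R ∈ V` (the Reeb vector) with `ω (R, v) = 0` for all `v` and `η R = 1`. -/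
theorem reeb_vector_exists_unique {V : Type*} [AddCommGroup V] [Module ℝ V]
    [FiniteDimensional ℝ V] {n : ℕ} (hdim : Module.finrank ℝ V = 2 * n + 1)
    (η : Module.Dual ℝ V) (ω : V [⋀^Fin 2]→ₗ[ℝ] ℝ)
    (hnd : altWedge (alt1 η) (altPow ω n) ≠ 0) :
    ∃! R : V, (∀ v : V, ω ![R, v] = 0) ∧ η R = 1 := by
  classical
  set B := omBilin ω with hB_def
  have hdim' : Module.finrank ℝ V = 1 + 2 * n := by omega
  -- Key: any nonzero x in the radical with eta x = 0 contradicts hnd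
  have key : ∀ x : V, (∀ y, ω ![x, y] = 0) → η x = 0 → x = 0 := by
    intro x hrad hη
    by_contra hx
    exact hnd (kills_eq_zero hdim' hx
      (kills_altWedge (kills_alt1 hη) (kills_altPow hrad n)))
  -- Find a nonzero radical vector via skew-symmetry in odd dimension
  obtain ⟨x₀, hx₀, hrad₀⟩ : ∃ x₀ : V, x₀ ≠ 0 ∧ ∀ y, ω ![x₀, y] = 0 := by
    set d := Module.finrank ℝ V with hd
    let b := Module.finBasis ℝ V
    let M : Matrix (Fin d) (Fin d) ℝ := fun i j => ω ![b i, b j]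
    have hdet : M.det = 0 := by
      have h1 : M.det = (-1 : ℝ) ^ d * M.det := by
        conv_lhs => rw [← Matrix.det_transpose]
        have hMT : M.transpose = -M := by
          ext i j
          simp only [Matrix.transpose_apply, Matrix.neg_apply, M]
          exact omega_swap ω (b i) (b j)
        rw [hMT, Matrix.det_neg, Fintype.card_fin]
      have hodd : (-1 : ℝ) ^ d = -1 := Odd.neg_one_pow (Nat.odd_iff.mpr (by omega))
      rw [hodd] at h1
      linarith
    obtain ⟨c, hc, hmv⟩ : ∃ c ≠ (0 : Fin d → ℝ), M.mulVec c = 0 :=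
      Matrix.exists_mulVec_eq_zero_iff.mpr hdet
    refine ⟨∑ j, c j • b j, ?_, ?_⟩
    · intro h
      apply hc
      have h2 : b.equivFun.symm c = 0 := by rw [Module.Basis.equivFun_symm_apply]; exact h
      exact (LinearEquiv.map_eq_zero_iff _).mp h2
    · -- first show it pairs to zero with every basis vector on the right
      have hbi : ∀ i, ω ![b i, ∑ j, c j • b j] = 0 := by
        intro i
        have : B (b i) (∑ j, c j • b j) = M.mulVec c i := by
          rw [map_sum]
          simp only [map_smul, smul_eq_mul, Matrix.mulVec, dotProduct]
          exact Finset.sum_congr rfl fun j _ => mul_comm _ _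
        have h0 : B (b i) (∑ j, c j • b j) = 0 := by rw [this, hmv]; rfl
        exact h0
      intro y
      -- B (∑ cj bj) y = - B y (∑ cj bj) and B y · vanishes on basis... use basis ext
      have hL : B (∑ j, c j • b j) = 0 := by
        apply b.ext
        intro i
        have := hbi i
        have hswap : ω ![∑ j, c j • b j, b i] = - ω ![b i, ∑ j, c j • b j] :=
          omega_swap ω (b i) _
        simp only [omBilin_apply, LinearMap.zero_apply, B]
        rw [hswap, this, neg_zero]
      have h4 := LinearMap.congr_fun hL y
      rw [LinearMap.zero_apply] at h4
      exact h4
  -- eta is nonzero on x₀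
  have hηx₀ : η x₀ ≠ 0 := fun h => hx₀ (key x₀ hrad₀ h)
  set R : V := (η x₀)⁻¹ • x₀ with hR_def
  have hRrad : ∀ y, ω ![R, y] = 0 := by
    intro y
    have h1 : B R y = (η x₀)⁻¹ • B x₀ y := by
      rw [hR_def, map_smul]; rfl
    have h2 : ω ![R, y] = B R y := rfl
    rw [h2, h1]
    have h3 : B x₀ y = 0 := hrad₀ y
    rw [h3, smul_zero]
  have hηR : η R = 1 := by
    rw [hR_def, map_smul, smul_eq_mul, inv_mul_cancel₀ hηx₀]
  refine ⟨R, ⟨hRrad, hηR⟩, ?_⟩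
  rintro R' ⟨hR'rad, hηR'⟩
  have hdiff : R' - R = 0 := by
    apply key
    · intro y
      have : B (R' - R) y = B R' y - B R y := by rw [map_sub]; rfl
      simp only [omBilin_apply, B] at this
      rw [this, hR'rad y, hRrad y, sub_zero]
    · rw [map_sub, hηR', hηR, sub_self]
  exact sub_eq_zero.mp hdiff
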